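/- Moment range conditions for the spherical mean transform: let f be continuous and compactly supported in R^d, and let g(p, r) = ∫_{|y|=1} f(p + r y) r^{d−1} dA(y) be its spherical integral data for p ∈ S ⊂ R^d. Then for every integer k ≥ 0, the moment M_k(p) = ∫_0^∞ r^{2k} g(p, r) dr agrees on S with the restriction of a polynomial of degree at most 2k (namely a constant multiple of Q_k(p) = ∫ |p−y|^{2k} f(y) dy). -/

import Mathlib

open MeasureTheory
noncomputable section

/-- Spherical integral data: `g(p,r) = r^{d-1} ∫_{|y|=1} f(p + r y) dA(y)`. -/
def sphData {d : ℕ} (f : EuclideanSpace ℝ (Fin d) → ℝ)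
    (p : EuclideanSpace ℝ (Fin d)) (r : ℝ) : ℝ :=
  r ^ (d - 1) *
    ⨍ y : Metric.sphere (0 : EuclideanSpace ℝ (Fin d)) 1,
      f (p + r • (y : EuclideanSpace ℝ (Fin d))) ∂((volume : Measure (EuclideanSpace ℝ (Fin d))).toSphere)

open MvPolynomial in
lemma poly_aux (d k : ℕ) (f : EuclideanSpace ℝ (Fin d) → ℝ) (hf : Continuous f)
    (hsupp : HasCompactSupport f) :
    ∃ P : MvPolynomial (Fin d) ℝ, P.totalDegree ≤ 2 * k ∧
      ∀ p : EuclideanSpace ℝ (Fin d),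
        MvPolynomial.eval (fun i => p i) P =
          ∫ y : EuclideanSpace ℝ (Fin d), ‖p - y‖ ^ (2 * k) * f y := by
  set W : MvPolynomial (Fin d ⊕ Fin d) ℝ :=
    (∑ i : Fin d, (X (Sum.inl i) - X (Sum.inr i)) ^ 2) ^ k with hW
  have hWdeg : W.totalDegree ≤ 2 * k := by
    have h1 : ∀ i : Fin d, ((X (Sum.inl i) - X (Sum.inr i) : MvPolynomial (Fin d ⊕ Fin d) ℝ) ^ 2).totalDegree ≤ 2 := by
      intro i
      refine (totalDegree_pow _ _).trans ?_
      have : (X (Sum.inl i) - X (Sum.inr i) : MvPolynomial (Fin d ⊕ Fin d) ℝ).totalDegree ≤ 1 := by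
        rw [sub_eq_add_neg]
        refine (totalDegree_add _ _).trans ?_
        simp [totalDegree_neg, totalDegree_X]
      omega
    have h2 : (∑ i : Fin d, (X (Sum.inl i) - X (Sum.inr i) : MvPolynomial (Fin d ⊕ Fin d) ℝ) ^ 2).totalDegree ≤ 2 :=
      (totalDegree_finset_sum _ _).trans (Finset.sup_le fun i _ => h1 i)
    calc W.totalDegree ≤ k * (∑ i : Fin d, (X (Sum.inl i) - X (Sum.inr i) : MvPolynomial (Fin d ⊕ Fin d) ℝ) ^ 2).totalDegree := totalDegree_pow _ _
      _ ≤ k * 2 := Nat.mul_le_mul_left _ h2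
      _ = 2 * k := Nat.mul_comm _ _
  have hWeval : ∀ p y : EuclideanSpace ℝ (Fin d),
      ‖p - y‖ ^ (2 * k) =
        ∑ m ∈ W.support, W.coeff m *
          ((∏ i, p i ^ m (Sum.inl i)) * ∏ i, y i ^ m (Sum.inr i)) := by
    intro p y
    have h1 : ‖p - y‖ ^ (2 * k) = (∑ i, (p i - y i) ^ 2) ^ k := by
      have hn : ‖p - y‖ ^ 2 = ∑ i, (p i - y i) ^ 2 := by
        rw [EuclideanSpace.norm_eq,
          Real.sq_sqrt (Finset.sum_nonneg fun i _ => pow_nonneg (norm_nonneg _) 2)]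
        refine Finset.sum_congr rfl fun i _ => ?_
        simp [Real.norm_eq_abs, sq_abs, PiLp.sub_apply]
      rw [pow_mul, hn]
    have h2 : (∑ i, (p i - y i) ^ 2) ^ k =
        eval (Sum.elim (fun i => p i) (fun i => y i)) W := by
      simp [hW]
    rw [h1, h2, eval_eq']
    refine Finset.sum_congr rfl fun m _ => ?_
    rw [Fintype.prod_sum_type]
    simp
  have hyi : ∀ i : Fin d, Continuous fun y : EuclideanSpace ℝ (Fin d) => y i :=
    fun i => (EuclideanSpace.proj i).continuous
  have hint : ∀ m : Fin d ⊕ Fin d →₀ ℕ,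
      Integrable (fun y : EuclideanSpace ℝ (Fin d) =>
        (∏ i, y i ^ m (Sum.inr i)) * f y) := by
    intro m
    refine Continuous.integrable_of_hasCompactSupport ?_ ?_
    · exact (continuous_finset_prod _ fun i _ => (hyi i).pow _).mul hf
    · exact hsupp.mul_left
  refine ⟨∑ m ∈ W.support,
      monomial (m.comapDomain Sum.inl Sum.inl_injective.injOn)
        (W.coeff m * ∫ y : EuclideanSpace ℝ (Fin d), (∏ i, y i ^ m (Sum.inr i)) * f y),
      ?_, ?_⟩
  · refine (totalDegree_finset_sum _ _).trans (Finset.sup_le fun m hm => ?_)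
    refine (totalDegree_monomial_le _ _).trans ?_
    have e1 : ((m.comapDomain Sum.inl Sum.inl_injective.injOn).sum fun _ => (id : ℕ → ℕ))
        = ∑ i : Fin d, m (Sum.inl i) := by
      rw [Finsupp.sum_fintype _ _ fun _ => rfl]
      simp [Finsupp.comapDomain_apply]
    have e2 : (m.sum fun _ e => e) = ∑ j : Fin d ⊕ Fin d, m j :=
      Finsupp.sum_fintype _ _ fun _ => rfl
    have e3 : ∑ i : Fin d, m (Sum.inl i) ≤ ∑ j : Fin d ⊕ Fin d, m j := by
      rw [Fintype.sum_sum_type]; omega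
    have e4 := le_totalDegree hm
    rw [e2] at e4
    rw [e1]
    exact e3.trans (e4.trans hWdeg)
  · intro p
    rw [map_sum]
    simp only [eval_monomial, Finsupp.prod_pow, Finsupp.comapDomain_apply]
    have : (fun y : EuclideanSpace ℝ (Fin d) => ‖p - y‖ ^ (2 * k) * f y) =
        fun y => ∑ m ∈ W.support,
          (W.coeff m * ∏ i, p i ^ m (Sum.inl i)) *
            ((∏ i, y i ^ m (Sum.inr i)) * f y) := by
      funext y
      rw [hWeval p y, Finset.sum_mul]
      refine Finset.sum_congr rfl fun m _ => by ring
    rw [this, integral_finset_sum _ fun m _ => (hint m).const_mul _]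
    refine Finset.sum_congr rfl fun m _ => ?_
    rw [integral_const_mul _]
    ring

lemma integral_volumeIoiPow_real (n : ℕ) (H : ℝ → ℝ) :
    ∫ x : Set.Ioi (0:ℝ), H x ∂(Measure.volumeIoiPow n) =
      ∫ r in Set.Ioi (0:ℝ), r ^ n * H r := by
  rw [Measure.volumeIoiPow]
  simp only [ENNReal.ofReal]
  rw [integral_withDensity_eq_integral_smul
      ((measurable_subtype_coe.pow_const _).real_toNNReal) (fun a : Set.Ioi (0:ℝ) => H a),
    integral_subtype_comap measurableSet_Ioi (fun a : ℝ => Real.toNNReal (a ^ n) • H a)]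
  refine setIntegral_congr_fun measurableSet_Ioi fun x hx => ?_
  rw [NNReal.smul_def, Real.coe_toNNReal _ (pow_nonneg (le_of_lt hx) _), smul_eq_mul]

lemma polar_aux (d k : ℕ) (hd : 1 ≤ d) (f : EuclideanSpace ℝ (Fin d) → ℝ)
    (hf : Continuous f) (hsupp : HasCompactSupport f) (p : EuclideanSpace ℝ (Fin d)) :
    ∫ r in Set.Ioi (0:ℝ), r ^ (2 * k) * sphData f p r =
      (((volume : Measure (EuclideanSpace ℝ (Fin d))).toSphere Set.univ).toReal)⁻¹ *
        ∫ y : EuclideanSpace ℝ (Fin d), ‖p - y‖ ^ (2 * k) * f y := by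
  haveI : Nontrivial (EuclideanSpace ℝ (Fin d)) := by
    refine Module.nontrivial_of_finrank_pos (R := ℝ) ?_
    rw [finrank_euclideanSpace_fin]; omega
  set σ : Measure (Metric.sphere (0 : EuclideanSpace ℝ (Fin d)) 1) :=
    (volume : Measure (EuclideanSpace ℝ (Fin d))).toSphere with hσ
  set I : ℝ → ℝ := fun r =>
    ∫ y : Metric.sphere (0 : EuclideanSpace ℝ (Fin d)) 1,
      f (p + r • (y : EuclideanSpace ℝ (Fin d))) ∂σ with hI
  set F : EuclideanSpace ℝ (Fin d) → ℝ := fun x => ‖x‖ ^ (2 * k) * f (p + x) with hFdef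
  have hdim : Module.finrank ℝ (EuclideanSpace ℝ (Fin d)) = d := finrank_euclideanSpace_fin
  have hFc : Continuous F := (continuous_norm.pow _).mul (hf.comp (continuous_const.add continuous_id))
  have hFs : HasCompactSupport F := by
    have h : HasCompactSupport fun x : EuclideanSpace ℝ (Fin d) => f (p + x) :=
      hsupp.comp_homeomorph (Homeomorph.addLeft p)
    exact h.mul_left
  have hFi : Integrable F := hFc.integrable_of_hasCompactSupport hFs
  have mp := (volume : Measure (EuclideanSpace ℝ (Fin d))).measurePreserving_homeomorphUnitSphereProd
  rw [hdim] at mp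
  set G : Metric.sphere (0 : EuclideanSpace ℝ (Fin d)) 1 × Set.Ioi (0:ℝ) → ℝ :=
    fun z => F ((z.2 : ℝ) • (z.1 : EuclideanSpace ℝ (Fin d))) with hG
  have hGh : (fun x : ({0}ᶜ : Set (EuclideanSpace ℝ (Fin d))) =>
      G (homeomorphUnitSphereProd (EuclideanSpace ℝ (Fin d)) x)) = (fun x : ({0}ᶜ : Set (EuclideanSpace ℝ (Fin d))) => F ↑x) := by
    funext x
    simp only [hG]
    congr 1
    have h := congrArg Subtype.val
      ((homeomorphUnitSphereProd (EuclideanSpace ℝ (Fin d))).symm_apply_apply x)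
    rwa [homeomorphUnitSphereProd_symm_apply_coe] at h
  have hcomap : Integrable (fun x : ({0}ᶜ : Set (EuclideanSpace ℝ (Fin d))) => F x)
      ((volume : Measure (EuclideanSpace ℝ (Fin d))).comap Subtype.val) := by
    have hemb := MeasurableEmbedding.subtype_coe
      (measurableSet_singleton (0 : EuclideanSpace ℝ (Fin d))).compl
    have h : (fun x : ({0}ᶜ : Set (EuclideanSpace ℝ (Fin d))) => F x) = F ∘ Subtype.val := rfl
    rw [h, ← hemb.integrable_map_iff,
      map_comap_subtype_coe (measurableSet_singleton (0 : EuclideanSpace ℝ (Fin d))).compl,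
      MeasureTheory.restrict_compl_singleton]
    exact hFi
  have hGint : Integrable G (σ.prod (Measure.volumeIoiPow (d - 1))) := by
    rw [← mp.integrable_comp_emb (Homeomorph.measurableEmbedding _)]
    show Integrable (fun x => G (homeomorphUnitSphereProd (EuclideanSpace ℝ (Fin d)) x)) _
    rw [hGh]; exact hcomap
  have key : ∫ x, F x = ∫ z, G z ∂(σ.prod (Measure.volumeIoiPow (d - 1))) := by
    rw [← mp.integral_comp (Homeomorph.measurableEmbedding _) G]
    have : (∫ x : ({0}ᶜ : Set (EuclideanSpace ℝ (Fin d))),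
        G (homeomorphUnitSphereProd (EuclideanSpace ℝ (Fin d)) x)
        ∂((volume : Measure (EuclideanSpace ℝ (Fin d))).comap Subtype.val)) =
        ∫ x : ({0}ᶜ : Set (EuclideanSpace ℝ (Fin d))), F x
        ∂((volume : Measure (EuclideanSpace ℝ (Fin d))).comap Subtype.val) := by
      rw [hGh]
    rw [this, integral_subtype_comap (measurableSet_singleton (0 : EuclideanSpace ℝ (Fin d))).compl,
      MeasureTheory.restrict_compl_singleton]
  have hGval : ∀ (y : Metric.sphere (0 : EuclideanSpace ℝ (Fin d)) 1) (r : Set.Ioi (0:ℝ)),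
      G (y, r) = (r:ℝ) ^ (2 * k) * f (p + (r:ℝ) • (y : EuclideanSpace ℝ (Fin d))) := by
    intro y r
    simp only [hG, hFdef]
    congr 2
    rw [norm_smul, mem_sphere_zero_iff_norm.mp y.2, mul_one, Real.norm_eq_abs, abs_of_pos r.2]
  have step2 : ∫ z, G z ∂(σ.prod (Measure.volumeIoiPow (d - 1))) =
      ∫ r : Set.Ioi (0:ℝ), (r:ℝ) ^ (2 * k) * I (r:ℝ) ∂(Measure.volumeIoiPow (d - 1)) := by
    rw [integral_prod_symm _ hGint]
    refine integral_congr_ae (Filter.Eventually.of_forall fun r => ?_)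
    calc (∫ y, G (y, r) ∂σ)
        = ∫ y : Metric.sphere (0 : EuclideanSpace ℝ (Fin d)) 1,
            (r:ℝ) ^ (2 * k) * f (p + (r:ℝ) • (y : EuclideanSpace ℝ (Fin d))) ∂σ := by
          refine integral_congr_ae (Filter.Eventually.of_forall fun y => ?_)
          exact hGval y r
      _ = (r:ℝ) ^ (2 * k) * I (r:ℝ) := integral_const_mul _ _
  have step3 : (∫ r : Set.Ioi (0:ℝ), (r:ℝ) ^ (2 * k) * I (r:ℝ) ∂(Measure.volumeIoiPow (d - 1)))
      = ∫ r in Set.Ioi (0:ℝ), r ^ (d - 1) * (r ^ (2 * k) * I r) :=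
    integral_volumeIoiPow_real (d - 1) (fun r => r ^ (2 * k) * I r)
  have hsph : ∀ r : ℝ, sphData f p r = r ^ (d - 1) * (((σ Set.univ).toReal)⁻¹ * I r) := by
    intro r
    rw [sphData, average_eq]
    simp [hσ, hI, smul_eq_mul, measureReal_def]
  calc (∫ r in Set.Ioi (0:ℝ), r ^ (2 * k) * sphData f p r)
      = ∫ r in Set.Ioi (0:ℝ), ((σ Set.univ).toReal)⁻¹ * (r ^ (d - 1) * (r ^ (2 * k) * I r)) := by
        refine setIntegral_congr_fun measurableSet_Ioi fun r _ => ?_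
        rw [hsph]; ring
    _ = ((σ Set.univ).toReal)⁻¹ * ∫ r in Set.Ioi (0:ℝ), r ^ (d - 1) * (r ^ (2 * k) * I r) :=
        integral_const_mul _ _
    _ = ((σ Set.univ).toReal)⁻¹ * ∫ x, F x := by rw [key, step2, step3]
    _ = ((σ Set.univ).toReal)⁻¹ * ∫ y : EuclideanSpace ℝ (Fin d), ‖p - y‖ ^ (2 * k) * f y := by
        congr 1
        rw [← integral_add_left_eq_self p (f := fun y : EuclideanSpace ℝ (Fin d) => ‖p - y‖ ^ (2 * k) * f y)]
        refine integral_congr_ae (Filter.Eventually.of_forall fun x => ?_)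
        simp [hFdef, sub_add_cancel_left, norm_neg]

theorem moment_range_conditions (d : ℕ) (hd : 1 ≤ d)
    (f : EuclideanSpace ℝ (Fin d) → ℝ) (hf : Continuous f) (hsupp : HasCompactSupport f)
    (S : Set (EuclideanSpace ℝ (Fin d))) (k : ℕ) :
    ∃ c : ℝ, 0 < c ∧ ∃ P : MvPolynomial (Fin d) ℝ, P.totalDegree ≤ 2 * k ∧
      (∀ p : EuclideanSpace ℝ (Fin d),
        MvPolynomial.eval (fun i => p i) P =
          ∫ y : EuclideanSpace ℝ (Fin d), ‖p - y‖ ^ (2 * k) * f y) ∧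
      ∀ p ∈ S,
        (∫ r in Set.Ioi (0 : ℝ), r ^ (2 * k) * sphData f p r) =
          c * MvPolynomial.eval (fun i => p i) P := by
  haveI : Nontrivial (EuclideanSpace ℝ (Fin d)) := by
    refine Module.nontrivial_of_finrank_pos (R := ℝ) ?_
    rw [finrank_euclideanSpace_fin]; omega
  obtain ⟨P, hPdeg, hPeval⟩ := poly_aux d k f hf hsupp
  refine ⟨(((volume : Measure (EuclideanSpace ℝ (Fin d))).toSphere Set.univ).toReal)⁻¹,
    ?_, P, hPdeg, hPeval, fun p _ => ?_⟩
  · refine inv_pos.mpr (ENNReal.toReal_pos ?_ (measure_ne_top _ _))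
    rw [Measure.toSphere_apply_univ, finrank_euclideanSpace_fin]
    exact mul_ne_zero (Nat.cast_ne_zero.mpr (by omega))
      (Metric.measure_ball_pos _ _ one_pos).ne'
  · rw [hPeval p]
    exact polar_aux d k hd f hf hsupp p
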